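/- The language of the generalized Thue-Morse word t_{b,m} is invariant under each morphism Π_x defined by Π_x(k) = x + k (mod m) for x ∈ Z_m: if w is a factor of t_{b,m}, then so is Π_x(w). -/

import Mathlib

open Filter Topology

/-- The prefix of length `n` of an infinite word `u`. -/
def pref {A : Type*} (u : ℕ → A) (n : ℕ) : List A :=
  (List.range n).map u

/-- `w` is a factor of the infinite word `u`. -/
def isFactor {A : Type*} (u : ℕ → A) (w : List A) : Prop :=
  ∃ i, w = (List.range w.length).map (fun j => u (i + j))

/-- The number of occurrences of `w` in the finite word `v`. -/
def occ {A : Type*} [DecidableEq A] (w v : List A) : ℕ :=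
  (List.range (v.length + 1)).countP (fun i => decide ((v.drop i).take w.length = w))

/-- The frequency of the factor `w` in the infinite word `u` is `r`. -/
def freq {A : Type*} [DecidableEq A] (u : ℕ → A) (w : List A) (r : ℝ) : Prop :=
  Tendsto (fun n => (occ w (pref u n) : ℝ) / n) atTop (𝓝 r)

/-- Image of the letter `k` under the generalized Thue–Morse morphism `φ_{b,m}`. -/
def phiL (b : ℕ) {m : ℕ} (k : ZMod m) : List (ZMod m) :=
  (List.range b).map (fun i => k + (i : ZMod m))

/-- Extension of `φ_{b,m}` to finite words. -/
def phiW (b : ℕ) {m : ℕ} (s : List (ZMod m)) : List (ZMod m) :=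
  s.flatMap (phiL b)

/-- `u` is the fixed point of `φ_{b,m}` starting in `0`. -/
def isTM (b m : ℕ) (u : ℕ → ZMod m) : Prop :=
  u 0 = 0 ∧ ∀ n i, i < b → u (b * n + i) = u n + (i : ZMod m)

/-- The language of `t_{b,m}` is invariant under every morphism `Π_x : k ↦ x + k`. -/
theorem tm_invariant_Pi (b m : ℕ) (hb : 2 ≤ b) (hm : 1 ≤ m) (u : ℕ → ZMod m)
    (hu : isTM b m u) (x : ZMod m) (w : List (ZMod m)) (hw : isFactor u w) :
    isFactor u (w.map (fun k => x + k)) := by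
  obtain ⟨h0, hrec⟩ := hu
  have hb1 : 1 < b := hb
  -- key digit lemma
  have key : ∀ k, ∀ t < b ^ k, ∀ n, u (b ^ k * n + t) = u n + u t := by
    intro k
    induction k with
    | zero =>
      intro t ht n
      have : t = 0 := by simpa using ht
      subst this
      simp [h0]
    | succ k ih =>
      intro t ht n
      have hi : t % b < b := Nat.mod_lt _ (by omega)
      have hq : t / b < b ^ k := Nat.div_lt_of_lt_mul (by rw [pow_succ'] at ht; exact ht)
      have e1 : b ^ (k + 1) * n + t = b * (b ^ k * n + t / b) + t % b := by
        have := Nat.div_add_mod t b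
        ring_nf
        omega
      have e2 : t = b * (t / b) + t % b := (Nat.div_add_mod t b).symm
      rw [e1, hrec _ _ hi, ih _ hq]
      conv_rhs => rw [e2, hrec _ _ hi]
      ring
  -- surjectivity onto values
  have surj : ∀ r : ℕ, ∃ n, u n = (r : ZMod m) := by
    intro r
    induction r with
    | zero => exact ⟨0, by simp [h0]⟩
    | succ r ih =>
      obtain ⟨n, hn⟩ := ih
      refine ⟨b * n + 1, ?_⟩
      rw [hrec n 1 (by omega), hn]
      push_cast
      ring
  obtain ⟨i, hi⟩ := hw
  obtain ⟨n, hn⟩ := surj x.val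
  have : NeZero m := ⟨by omega⟩
  rw [ZMod.natCast_zmod_val] at hn
  have hk : i + w.length < b ^ (i + w.length) := Nat.lt_pow_self hb1
  set k := i + w.length
  refine ⟨b ^ k * n + i, ?_⟩
  rw [List.length_map, hi, List.map_map, List.length_map, List.length_range]
  apply List.map_congr_left
  intro j hj
  rw [List.mem_range] at hj
  have : b ^ k * n + i + j = b ^ k * n + (i + j) := by ring
  rw [Function.comp_apply, this, key k (i + j) (by omega) n, hn]
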